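/- Fix p ∈ (0,1). With Υ_p(a) := ∫_{β(a)}^{α(a)} η_{p,a}(x)/√(Q_{p,a}(x)) dx for a > a_*, where β(a) < α(a) are the two positive roots of Q_{p,a} and η_{p,a}(x) := −(p+1)·a·x^(1−p) − (2−p)·a·x^(−1−p) + (1−p)²·(2p+1)·x^(p+1) + 2·(4p²−4p+1)·x^(p−1) + p²·(3−2p)·x^(p−3), one has the one-sided limit lim_{a → a_*⁺} Υ_p(a) = −√2·p^(p/2)·(1−p)^((1−p)/2)·π. -/

import Mathlib

open Real Set MeasureTheory intervalIntegral Filter Topology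

/-- The function `Q_{p,a}(x) = a·x^(2(1−p)) − (1−p)²·x² − p²`. -/
noncomputable def Qfun (p a x : ℝ) : ℝ :=
  a * x ^ (2 * (1 - p)) - (1 - p) ^ 2 * x ^ 2 - p ^ 2

/-- The integrand `η_{p,a}` of the second variation of the `p`-elastic energy in the unit
normal direction. -/
noncomputable def etafun (p a x : ℝ) : ℝ :=
  -(p + 1) * a * x ^ (1 - p) - (2 - p) * a * x ^ (-1 - p)
    + (1 - p) ^ 2 * (2 * p + 1) * x ^ (p + 1)
    + 2 * (4 * p ^ 2 - 4 * p + 1) * x ^ (p - 1)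
    + p ^ 2 * (3 - 2 * p) * x ^ (p - 3)

/-- The second variation `Υ_p(a) = ∫_{β(a)}^{α(a)} η_{p,a}(x)/√(Q_{p,a}(x)) dx` of the
`p`-elastic energy over one half-period of the curvature for the unit normal variation. -/
noncomputable def Ups (p : ℝ) (β α : ℝ → ℝ) (a : ℝ) : ℝ :=
  ∫ x in β a..α a, etafun p a x / Real.sqrt (Qfun p a x)


section Alg

variable {p : ℝ} (hp0 : 0 < p) (hp1 : p < 1)

noncomputable def xst (p : ℝ) : ℝ := (p / (1 - p)) ^ ((1:ℝ)/2)

lemma hs0 (hp0 : 0 < p) (hp1 : p < 1) : 0 < p / (1 - p) := div_pos hp0 (by linarith)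

lemma xst_pos (hp0 : 0 < p) (hp1 : p < 1) : 0 < xst p := Real.rpow_pos_of_pos (hs0 hp0 hp1) _

include hp0 hp1 in
lemma xst_rpow (t : ℝ) : (xst p) ^ t = (p / (1 - p)) ^ (t / 2) := by
  rw [xst, ← Real.rpow_mul (hs0 hp0 hp1).le]
  ring_nf

include hp0 hp1 in
lemma ast_eq : p ^ p * (1 - p) ^ (1 - p) = (1 - p) * (p / (1 - p)) ^ p := by
  have hq : (0:ℝ) < 1 - p := by linarith
  rw [Real.div_rpow hp0.le hq.le, Real.rpow_sub hq, Real.rpow_one]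
  have : (1 - p) ^ p ≠ 0 := (Real.rpow_pos_of_pos hq p).ne'
  field_simp

include hp0 hp1 in
lemma ast_xst_neg2p : p ^ p * (1 - p) ^ (1 - p) * (xst p) ^ (-(2*p)) = 1 - p := by
  have hs := hs0 hp0 hp1
  rw [ast_eq hp0 hp1, xst_rpow hp0 hp1]
  have : -(2*p)/2 = -p := by ring
  rw [this, mul_assoc, ← Real.rpow_add hs, add_neg_cancel, Real.rpow_zero, mul_one]

include hp0 hp1 in
lemma Qfun_ast_xst : Qfun p (p ^ p * (1 - p) ^ (1 - p)) (xst p) = 0 := by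
  have hs := hs0 hp0 hp1
  have hq : (0:ℝ) < 1 - p := by linarith
  have hx2 : (xst p) ^ (2:ℕ) = p / (1 - p) := by
    rw [← Real.rpow_natCast (xst p) 2, xst_rpow hp0 hp1]
    norm_num
  have hxe : (xst p) ^ (2 * (1 - p)) = (p / (1-p)) ^ (1 - p) := by
    rw [xst_rpow hp0 hp1]; ring_nf
  rw [Qfun, ast_eq hp0 hp1, hxe, hx2, mul_assoc, ← Real.rpow_add hs, add_sub_cancel,
    Real.rpow_one]
  field_simp
  ring

include hp0 hp1 in
lemma etafun_ast_xst :
    etafun p (p ^ p * (1 - p) ^ (1 - p)) (xst p)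
      = -2 * p ^ ((p+1)/2) * (1 - p) ^ ((3-p)/2) := by
  have hs := hs0 hp0 hp1
  have hq : (0:ℝ) < 1 - p := by linarith
  set s := p / (1 - p) with hsdef
  have hsne : s ≠ 0 := hs.ne'
  -- powers of s
  have key : ∀ t : ℝ, s ^ (t + 1) = s ^ t * s := by
    intro t; rw [Real.rpow_add hs, Real.rpow_one]
  have e1 : (xst p) ^ (1 - p) = s ^ ((1-p)/2) := xst_rpow hp0 hp1 _
  have e2 : (xst p) ^ (-1 - p) = s ^ ((-1-p)/2) := xst_rpow hp0 hp1 _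
  have e3 : (xst p) ^ (p + 1) = s ^ ((p+1)/2) := xst_rpow hp0 hp1 _
  have e4 : (xst p) ^ (p - 1) = s ^ ((p-1)/2) := xst_rpow hp0 hp1 _
  have e5 : (xst p) ^ (p - 3) = s ^ ((p-3)/2) := xst_rpow hp0 hp1 _
  set S := s ^ ((p-3)/2) with hS
  have f4 : s ^ ((p-1)/2) = S * s := by
    have : (p-1)/2 = (p-3)/2 + 1 := by ring
    rw [this, key]
  have f3 : s ^ ((p+1)/2) = S * s * s := by
    have : (p+1)/2 = ((p-3)/2 + 1) + 1 := by ring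
    rw [this, key, key]
  have fa : p ^ p * (1 - p) ^ (1 - p) = (1 - p) * s ^ p := ast_eq hp0 hp1
  have g1 : s ^ p * s ^ ((1-p)/2) = S * s * s := by
    rw [← Real.rpow_add hs, ← f3]; ring_nf
  have g2 : s ^ p * s ^ ((-1-p)/2) = S * s := by
    rw [← Real.rpow_add hs, ← f4]; ring_nf
  rw [etafun, e1, e2, e3, e4, e5, fa, f3, f4]
  have expand : -(p + 1) * ((1 - p) * s ^ p) * s ^ ((1-p)/2)
      - (2 - p) * ((1 - p) * s ^ p) * s ^ ((-1-p)/2)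
      + (1 - p) ^ 2 * (2 * p + 1) * (S * s * s)
      + 2 * (4 * p ^ 2 - 4 * p + 1) * (S * s)
      + p ^ 2 * (3 - 2 * p) * S
      = S * (-(p+1)*(1-p)*(s*s) + (1-p)^2*(2*p+1)*(s*s)
          + (-(2-p)*(1-p) + 2*(4*p^2-4*p+1)) * s + p^2*(3-2*p)) := by
    have h1 : (1 - p) * s ^ p * s ^ ((1-p)/2) = (1-p) * (S * s * s) := by
      rw [mul_assoc, g1]
    have h2 : (1 - p) * s ^ p * s ^ ((-1-p)/2) = (1-p) * (S * s) := by
      rw [mul_assoc, g2]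
    calc -(p + 1) * ((1 - p) * s ^ p) * s ^ ((1-p)/2)
        - (2 - p) * ((1 - p) * s ^ p) * s ^ ((-1-p)/2)
        + (1 - p) ^ 2 * (2 * p + 1) * (S * s * s)
        + 2 * (4 * p ^ 2 - 4 * p + 1) * (S * s)
        + p ^ 2 * (3 - 2 * p) * S
        = -(p + 1) * ((1 - p) * s ^ p * s ^ ((1-p)/2))
          - (2 - p) * ((1 - p) * s ^ p * s ^ ((-1-p)/2))
          + (1 - p) ^ 2 * (2 * p + 1) * (S * s * s)
          + 2 * (4 * p ^ 2 - 4 * p + 1) * (S * s)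
          + p ^ 2 * (3 - 2 * p) * S := by ring
      _ = S * (-(p+1)*(1-p)*(s*s) + (1-p)^2*(2*p+1)*(s*s)
          + (-(2-p)*(1-p) + 2*(4*p^2-4*p+1)) * s + p^2*(3-2*p)) := by
        rw [h1, h2]; ring
  rw [expand]
  -- now evaluate the bracket with s = p/(1-p)
  have bracket : (-(p+1)*(1-p)*(s*s) + (1-p)^2*(2*p+1)*(s*s)
      + (-(2-p)*(1-p) + 2*(4*p^2-4*p+1)) * s + p^2*(3-2*p)) = -2*p^2 := by
    rw [hsdef]; field_simp; ring
  rw [bracket]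
  -- S = p^((p-3)/2) * (1-p)^((3-p)/2)
  have hSval : S = p ^ ((p-3)/2) * (1-p) ^ ((3-p)/2) := by
    rw [hS, hsdef, Real.div_rpow hp0.le hq.le]
    rw [div_eq_mul_inv, ← Real.rpow_neg hq.le, show -((p-3)/2) = (3-p)/2 by ring]
  rw [hSval]
  have : p ^ ((p-3)/2) * p ^ (2:ℝ) = p ^ ((p+1)/2) := by
    rw [← Real.rpow_add hp0]; ring_nf
  have hp2 : (p:ℝ) ^ (2:ℕ) = p ^ (2:ℝ) := by
    rw [← Real.rpow_natCast p 2]; norm_num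
  calc p ^ ((p-3)/2) * (1-p) ^ ((3-p)/2) * (-2*p^2)
      = -2 * (p ^ ((p-3)/2) * p ^ (2:ℝ)) * (1-p)^((3-p)/2) := by rw [← hp2]; ring
    _ = -2 * p ^ ((p+1)/2) * (1-p)^((3-p)/2) := by rw [this]

include hp0 hp1 in
lemma const_ident :
    (-2 * p ^ ((p+1)/2) * (1 - p) ^ ((3-p)/2)) / Real.sqrt (2*p*(1-p)^2)
      = -(Real.sqrt 2 * p ^ (p/2) * (1-p) ^ ((1-p)/2)) := by
  have hq : (0:ℝ) < 1 - p := by linarith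
  have hsq : Real.sqrt (2*p*(1-p)^2) = Real.sqrt 2 * p ^ ((1:ℝ)/2) * (1-p) := by
    rw [Real.sqrt_mul (by positivity), Real.sqrt_mul (by norm_num), Real.sqrt_sq hq.le,
      Real.sqrt_eq_rpow p]
  rw [hsq]
  have h1 : p ^ ((p+1)/2) = p ^ (p/2) * p ^ ((1:ℝ)/2) := by
    rw [← Real.rpow_add hp0]; ring_nf
  have h2 : (1-p) ^ ((3-p)/2) = (1-p) ^ ((1-p)/2) * (1-p) := by
    rw [← Real.rpow_add_one hq.ne']; ring_nf
  rw [h1, h2]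
  have hps : p ^ ((1:ℝ)/2) ≠ 0 := (Real.rpow_pos_of_pos hp0 _).ne'
  have hsq2 : Real.sqrt 2 ≠ 0 := by positivity
  have h22 : Real.sqrt 2 ^ 2 = 2 := Real.sq_sqrt (by norm_num)
  rw [div_eq_iff (mul_ne_zero (mul_ne_zero hsq2 hps) hq.ne')]
  linear_combination (p ^ (p/2) * p ^ ((1:ℝ)/2) * (1-p) ^ ((1-p)/2) * (1-p)) * h22

end Alg

section CalcB

noncomputable def Qd (p a x : ℝ) : ℝ :=
  a * (2*(1-p)) * x ^ (2*(1-p) - 1) - (1-p)^2 * (2*x)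

noncomputable def Qdd (p a x : ℝ) : ℝ :=
  a * (2*(1-p)) * (2*(1-p)-1) * x ^ (2*(1-p) - 2) - 2*(1-p)^2

lemma hasDerivAt_Qfun (p a x : ℝ) (hx : x ≠ 0) : HasDerivAt (Qfun p a) (Qd p a x) x := by
  have h1 : HasDerivAt (fun y : ℝ => y ^ (2*(1-p))) ((2*(1-p)) * x ^ (2*(1-p) - 1)) x :=
    Real.hasDerivAt_rpow_const (Or.inl hx)
  have h2 : HasDerivAt (fun y : ℝ => y ^ (2:ℕ)) (2*x) x := by
    simpa using hasDerivAt_pow 2 x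
  have h := ((h1.const_mul a).sub (h2.const_mul ((1-p)^2))).sub_const (p^2)
  refine h.congr_deriv ?_
  simp only [Qd]; ring

lemma hasDerivAt_Qd (p a x : ℝ) (hx : x ≠ 0) : HasDerivAt (Qd p a) (Qdd p a x) x := by
  have h1 : HasDerivAt (fun y : ℝ => y ^ (2*(1-p) - 1)) ((2*(1-p) - 1) * x ^ (2*(1-p) - 1 - 1)) x :=
    Real.hasDerivAt_rpow_const (Or.inl hx)
  have h2 : HasDerivAt (fun y : ℝ => (1-p)^2 * (2*y)) ((1-p)^2 * 2) x := by
    exact (((hasDerivAt_id' x).const_mul 2).const_mul ((1-p)^2)).congr_deriv (by ring)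
  have h := (h1.const_mul (a * (2*(1-p)))).sub h2
  refine h.congr_deriv ?_
  simp only [Qdd]
  rw [show 2*(1-p) - 1 - 1 = 2*(1-p) - 2 by ring]
  ring

lemma continuous_Qfun (p a : ℝ) (hp1 : p ≤ 1) : Continuous (Qfun p a) := by
  rw [continuous_iff_continuousAt]
  intro x
  have h1 : ContinuousAt (fun y : ℝ => y ^ (2*(1-p))) x :=
    Real.continuousAt_rpow_const x _ (Or.inr (by linarith))
  exact ((h1.const_mul a).sub (((continuous_pow 2).continuousAt).const_mul _)).sub continuousAt_const

end CalcB

section Loc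

variable {p : ℝ}

lemma Qd_factor (p a x : ℝ) (hx : 0 < x) :
    Qd p a x = 2 * (1-p) * x * (a * x ^ (-(2*p)) - (1-p)) := by
  have : x ^ (2*(1-p) - 1) = x ^ (-(2*p)) * x := by
    rw [show 2*(1-p) - 1 = -(2*p) + 1 by ring, Real.rpow_add hx, Real.rpow_one]
  rw [Qd, this]; ring

lemma Qd_pos_left (hp0 : 0 < p) (hp1 : p < 1) {x : ℝ} (hx0 : 0 < x) (hx : x < xst p) :
    0 < Qd p (p ^ p * (1 - p) ^ (1 - p)) x := by
  have hq : (0:ℝ) < 1 - p := by linarith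
  have hast : 0 < p ^ p * (1 - p) ^ (1 - p) := by positivity
  rw [Qd_factor _ _ _ hx0]
  have h1 : (xst p) ^ (-(2*p)) < x ^ (-(2*p)) :=
    Real.rpow_lt_rpow_of_neg hx0 hx (by linarith)
  have h2 := ast_xst_neg2p hp0 hp1
  have h3 := (mul_lt_mul_iff_right₀ hast).mpr h1
  rw [h2] at h3
  have hpos : 0 < p ^ p * (1 - p) ^ (1 - p) * x ^ (-(2*p)) - (1-p) := by linarith
  positivity

lemma Qd_neg_right (hp0 : 0 < p) (hp1 : p < 1) {x : ℝ} (hx : xst p < x) :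
    Qd p (p ^ p * (1 - p) ^ (1 - p)) x < 0 := by
  have hq : (0:ℝ) < 1 - p := by linarith
  have hxs := xst_pos hp0 hp1
  have hx0 : 0 < x := hxs.trans hx
  have hast : 0 < p ^ p * (1 - p) ^ (1 - p) := by positivity
  rw [Qd_factor _ _ _ hx0]
  have h1 : x ^ (-(2*p)) < (xst p) ^ (-(2*p)) :=
    Real.rpow_lt_rpow_of_neg hxs hx (by linarith)
  have h2 := ast_xst_neg2p hp0 hp1
  have h3 := (mul_lt_mul_iff_right₀ hast).mpr h1
  rw [h2] at h3
  have hneg : p ^ p * (1 - p) ^ (1 - p) * x ^ (-(2*p)) - (1-p) < 0 := by linarith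
  have hfac : 0 < 2 * (1-p) * x := by positivity
  exact mul_neg_of_pos_of_neg hfac hneg

lemma Qast_strictMonoOn (hp0 : 0 < p) (hp1 : p < 1) :
    StrictMonoOn (Qfun p (p ^ p * (1 - p) ^ (1 - p))) (Icc 0 (xst p)) := by
  apply strictMonoOn_of_deriv_pos (convex_Icc _ _)
    ((continuous_Qfun p _ hp1.le).continuousOn)
  intro x hx
  rw [interior_Icc] at hx
  rw [(hasDerivAt_Qfun p _ x hx.1.ne').deriv]
  exact Qd_pos_left hp0 hp1 hx.1 hx.2

lemma Qast_strictAntiOn (hp0 : 0 < p) (hp1 : p < 1) :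
    StrictAntiOn (Qfun p (p ^ p * (1 - p) ^ (1 - p))) (Ici (xst p)) := by
  apply strictAntiOn_of_deriv_neg (convex_Ici _)
    ((continuous_Qfun p _ hp1.le).continuousOn)
  intro x hx
  rw [interior_Ici] at hx
  have hx0 : 0 < x := (xst_pos hp0 hp1).trans hx
  rw [(hasDerivAt_Qfun p _ x hx0.ne').deriv]
  exact Qd_neg_right hp0 hp1 hx

/-- Any positive root of `Q_{p,a}` for `a` slightly above `a_*` is near `x_*`. -/
lemma root_window (hp0 : 0 < p) (hp1 : p < 1) {δ : ℝ} (hδ0 : 0 < δ) (hδx : δ < xst p) :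
    ∃ ε > 0, ∀ a : ℝ, p ^ p * (1 - p) ^ (1 - p) < a → a < p ^ p * (1 - p) ^ (1 - p) + ε →
      ∀ y : ℝ, 0 < y → Qfun p a y = 0 → xst p - δ < y ∧ y < xst p + δ := by
  set ast := p ^ p * (1 - p) ^ (1 - p) with hastdef
  have hq : (0:ℝ) < 1 - p := by linarith
  have hast : 0 < ast := by positivity
  have hxs := xst_pos hp0 hp1
  have hQ0 : Qfun p ast (xst p) = 0 := Qfun_ast_xst hp0 hp1
  set B : ℝ := (2 * ast / (1-p)^2) ^ (1/(2*p)) with hBdef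
  have hB0 : 0 < B := Real.rpow_pos_of_pos (by positivity) _
  set X1 : ℝ := max (xst p + δ) (max 1 B) with hX1def
  have hX1a : xst p + δ ≤ X1 := le_max_left _ _
  have hX11 : (1:ℝ) ≤ X1 := le_trans (le_max_left _ _) (le_max_right _ _)
  have hX1B : B ≤ X1 := le_trans (le_max_right _ _) (le_max_right _ _)
  have hX10 : 0 < X1 := by linarith
  -- the two negative values
  have hn1 : Qfun p ast (xst p - δ) < 0 := by
    have := Qast_strictMonoOn hp0 hp1
      (show xst p - δ ∈ Icc 0 (xst p) by constructor <;> linarith)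
      (show xst p ∈ Icc 0 (xst p) by constructor <;> linarith)
      (by linarith)
    rw [hQ0] at this
    linarith
  have hn2 : Qfun p ast (xst p + δ) < 0 := by
    have := Qast_strictAntiOn hp0 hp1
      (show xst p ∈ Ici (xst p) from Set.mem_Ici.mpr (le_refl _))
      (show xst p + δ ∈ Ici (xst p) from Set.mem_Ici.mpr (by linarith))
      (by linarith)
    rw [hQ0] at this
    linarith
  set n1 : ℝ := -(Qfun p ast (xst p - δ)) with hn1def
  set n2 : ℝ := -(Qfun p ast (xst p + δ)) with hn2def
  have hn1pos : 0 < n1 := by simp [hn1def]; linarith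
  have hn2pos : 0 < n2 := by simp [hn2def]; linarith
  have hxse : (0:ℝ) < (xst p) ^ (2*(1-p)) + 1 := by positivity
  have hX1e : (0:ℝ) < X1 ^ (2*(1-p)) + 1 := by positivity
  refine ⟨min ((1-p)^2/2) (min (n1 / ((xst p) ^ (2*(1-p)) + 1)) (n2 / (X1 ^ (2*(1-p)) + 1))),
    by positivity, ?_⟩
  intro a ha1 ha2 y hy0 hQy
  set ε := min ((1-p)^2/2) (min (n1 / ((xst p) ^ (2*(1-p)) + 1)) (n2 / (X1 ^ (2*(1-p)) + 1)))
  have hεq : a - ast < (1-p)^2/2 := by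
    have := min_le_left ((1-p)^2/2) (min (n1 / ((xst p) ^ (2*(1-p)) + 1)) (n2 / (X1 ^ (2*(1-p)) + 1)))
    linarith
  have hεn1 : a - ast < n1 / ((xst p) ^ (2*(1-p)) + 1) := by
    have h := le_trans (min_le_right ((1-p)^2/2) _)
      (min_le_left (n1 / ((xst p) ^ (2*(1-p)) + 1)) (n2 / (X1 ^ (2*(1-p)) + 1)))
    linarith
  have hεn2 : a - ast < n2 / (X1 ^ (2*(1-p)) + 1) := by
    have h := le_trans (min_le_right ((1-p)^2/2) _)
      (min_le_right (n1 / ((xst p) ^ (2*(1-p)) + 1)) (n2 / (X1 ^ (2*(1-p)) + 1)))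
    linarith
  have hsplit : Qfun p a y = Qfun p ast y + (a - ast) * y ^ (2*(1-p)) := by
    simp [Qfun]; ring
  have haast : 0 < a - ast := by linarith
  constructor
  · -- y > xst - δ
    by_contra hcon
    push_neg at hcon
    -- y ≤ xst - δ
    have hyx : y ≤ xst p - δ := hcon
    have hmono : Qfun p ast y ≤ Qfun p ast (xst p - δ) := by
      rcases eq_or_lt_of_le hyx with h | h
      · rw [h]
      · exact ((Qast_strictMonoOn hp0 hp1) ⟨hy0.le, by linarith⟩
          ⟨by linarith, by linarith⟩ h).le
    have hye : y ^ (2*(1-p)) ≤ (xst p) ^ (2*(1-p)) :=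
      Real.rpow_le_rpow hy0.le (by linarith) (by linarith)
    have hlt : (a - ast) * y ^ (2*(1-p)) < n1 := by
      calc (a - ast) * y ^ (2*(1-p)) ≤ (a - ast) * ((xst p) ^ (2*(1-p))) :=
            mul_le_mul_of_nonneg_left hye haast.le
        _ < (n1 / ((xst p) ^ (2*(1-p)) + 1)) * ((xst p) ^ (2*(1-p)) + 1) := by
            apply mul_lt_mul' hεn1.le ?_ (by positivity) (by positivity)
            linarith
        _ = n1 := by field_simp
    rw [hsplit] at hQy
    have : Qfun p ast y < -n1 + n1 := by linarith
    simp at this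
    linarith
  · -- y < xst + δ
    by_contra hcon
    push_neg at hcon
    -- y ≥ xst + δ
    rcases le_or_gt y X1 with hyX | hyX
    · -- middle range: use anti-monotonicity
      have hmono : Qfun p ast y ≤ Qfun p ast (xst p + δ) := by
        rcases eq_or_lt_of_le hcon with h | h
        · rw [← h]
        · exact ((Qast_strictAntiOn hp0 hp1)
            (show xst p + δ ∈ Ici (xst p) from Set.mem_Ici.mpr (by linarith))
            (show y ∈ Ici (xst p) from Set.mem_Ici.mpr (by linarith)) h).le
      have hye : y ^ (2*(1-p)) ≤ X1 ^ (2*(1-p)) :=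
        Real.rpow_le_rpow hy0.le hyX (by linarith)
      have hlt : (a - ast) * y ^ (2*(1-p)) < n2 := by
        calc (a - ast) * y ^ (2*(1-p)) ≤ (a - ast) * (X1 ^ (2*(1-p))) :=
              mul_le_mul_of_nonneg_left hye haast.le
          _ < (n2 / (X1 ^ (2*(1-p)) + 1)) * (X1 ^ (2*(1-p)) + 1) := by
              apply mul_lt_mul' hεn2.le ?_ (by positivity) (by positivity)
              linarith
          _ = n2 := by field_simp
      rw [hsplit] at hQy
      linarith
    · -- far range: Q is very negative
      have hy1 : (1:ℝ) ≤ y := le_trans hX11 hyX.le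
      have hyB : B ≤ y := le_trans hX1B hyX.le
      have hsplit2 : y ^ (2*(1-p)) = y ^ (2:ℕ) * y ^ (-(2*p)) := by
        rw [← Real.rpow_natCast y 2, ← Real.rpow_add hy0,
          show ((2:ℕ):ℝ) + -(2*p) = 2*(1-p) by push_cast; ring]
      have h1 : y ^ (-(2*p)) ≤ (1:ℝ) :=
        Real.rpow_le_one_of_one_le_of_nonpos hy1 (by linarith)
      have h2 : y ^ (-(2*p)) ≤ B ^ (-(2*p)) :=
        Real.rpow_le_rpow_of_nonpos hB0 hyB (by linarith)
      have hBval : B ^ (-(2*p)) = (1-p)^2 / (2 * ast) := by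
        rw [hBdef, ← Real.rpow_mul (by positivity)]
        rw [show (1/(2*p)) * (-(2*p)) = -1 by field_simp]
        rw [Real.rpow_neg_one]
        rw [inv_div]
      have hay : a * y ^ (-(2*p)) < (1-p)^2 := by
        calc a * y ^ (-(2*p)) = ast * y ^ (-(2*p)) + (a - ast) * y ^ (-(2*p)) := by ring
          _ ≤ ast * B ^ (-(2*p)) + (a - ast) * 1 := by
              have t1 : ast * y ^ (-(2*p)) ≤ ast * B ^ (-(2*p)) :=
                mul_le_mul_of_nonneg_left h2 hast.le
              have t2 : (a - ast) * y ^ (-(2*p)) ≤ (a - ast) * 1 :=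
                mul_le_mul_of_nonneg_left h1 haast.le
              linarith
          _ = (1-p)^2/2 + (a - ast) := by
              rw [hBval]; field_simp
          _ < (1-p)^2 := by linarith
      have : Qfun p a y < 0 := by
        rw [Qfun, hsplit2]
        have hy2 : (0:ℝ) < y ^ (2:ℕ) := by positivity
        have : a * (y ^ (2:ℕ) * y ^ (-(2*p))) ≤ (1-p)^2 * y ^ (2:ℕ) := by
          rw [show a * (y ^ (2:ℕ) * y ^ (-(2*p))) = (a * y ^ (-(2*p))) * y ^ (2:ℕ) by ring]
          exact mul_le_mul_of_nonneg_right hay.le hy2.le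
        have hp2 : (0:ℝ) < p ^ (2:ℕ) := by positivity
        linarith
      linarith
end Loc

section Sandwich

/-- A concave function vanishing at the endpoints is nonnegative on the interval. -/
lemma concave_nonneg_of_endpoints {b al : ℝ} {u : ℝ → ℝ} (hba : b < al)
    (hu : ConcaveOn ℝ (Icc b al) u) (hub : u b = 0) (hual : u al = 0) :
    ∀ x ∈ Icc b al, 0 ≤ u x := by
  intro x hx
  obtain ⟨hxb, hxal⟩ := hx
  set t : ℝ := (x - b) / (al - b) with ht
  have hal : 0 < al - b := by linarith
  have ht0 : 0 ≤ t := div_nonneg (by linarith) hal.le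
  have ht1 : t ≤ 1 := by
    rw [ht, div_le_one hal]; linarith
  have hx' : (1 - t) • b + t • al = x := by
    simp only [smul_eq_mul]
    have e : t * (al - b) = x - b := by rw [ht]; exact div_mul_cancel₀ _ hal.ne'
    linear_combination e
  have := hu.2 (Set.left_mem_Icc.mpr hba.le) (Set.right_mem_Icc.mpr hba.le)
    (by linarith : (0:ℝ) ≤ 1 - t) ht0 (by ring)
  rw [hx'] at this
  rw [hub, hual] at this
  simpa using this

/-- Sandwich estimate for a C² function vanishing at both endpoints with second derivative
pinched between `-2M` and `-2m`. -/
lemma sandwich_quad {b al m M : ℝ} {f f' f'' : ℝ → ℝ} (hba : b < al)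
    (hcont : ContinuousOn f (Icc b al))
    (hf' : ∀ x ∈ Ioo b al, HasDerivAt f (f' x) x)
    (hf'' : ∀ x ∈ Ioo b al, HasDerivAt f' (f'' x) x)
    (hfb : f b = 0) (hfal : f al = 0)
    (hlow : ∀ x ∈ Ioo b al, -(2*M) ≤ f'' x) (hupp : ∀ x ∈ Ioo b al, f'' x ≤ -(2*m)) :
    ∀ x ∈ Icc b al, m * ((al - x)*(x - b)) ≤ f x ∧ f x ≤ M * ((al - x)*(x - b)) := by
  have hquad : ∀ c : ℝ, ∀ x : ℝ, HasDerivAt (fun y => c * ((al - y)*(y - b)))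
      (c * (al + b - 2*x)) x := by
    intro c x
    have h := (((hasDerivAt_id x).const_sub al).mul ((hasDerivAt_id x).sub_const b)).const_mul c
    refine h.congr_deriv ?_
    simp only [id_eq]
    ring
  have hquad' : ∀ c : ℝ, ∀ x : ℝ, HasDerivAt (fun y => c * (al + b - 2*y)) (c * (-2)) x := by
    intro c x
    have h := (((hasDerivAt_id x).const_mul 2).const_sub (al + b)).const_mul c
    exact h.congr_deriv (by norm_num)
  -- lower bound: u := f - m*quad is concave, 0 at endpoints
  have hIcc : interior (Icc b al) = Ioo b al := interior_Icc
  have low : ∀ x ∈ Icc b al, 0 ≤ f x - m * ((al - x)*(x - b)) := by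
    apply concave_nonneg_of_endpoints hba
    · apply concaveOn_of_hasDerivWithinAt2_nonpos (f' := fun x => f' x - m * (al + b - 2*x))
        (f'' := fun x => f'' x + 2*m) (convex_Icc b al)
      · exact hcont.sub ((continuous_const.mul ((continuous_const.sub continuous_id).mul
          (continuous_id.sub continuous_const))).continuousOn)
      · intro x hx
        rw [hIcc] at hx ⊢
        exact (((hf' x hx).sub (hquad m x)).hasDerivWithinAt)
      · intro x hx
        rw [hIcc] at hx ⊢
        have := ((hf'' x hx).sub (hquad' m x)).hasDerivWithinAt (s := Ioo b al)
        exact this.congr_deriv (by ring)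
      · intro x hx
        rw [hIcc] at hx
        have := hupp x hx
        linarith
    · simp [hfb]
    · simp [hfal]
  have upp : ∀ x ∈ Icc b al, 0 ≤ M * ((al - x)*(x - b)) - f x := by
    apply concave_nonneg_of_endpoints hba
    · apply concaveOn_of_hasDerivWithinAt2_nonpos (f' := fun x => M * (al + b - 2*x) - f' x)
        (f'' := fun x => -(2*M) - f'' x) (convex_Icc b al)
      · exact ((continuous_const.mul ((continuous_const.sub continuous_id).mul
          (continuous_id.sub continuous_const))).continuousOn).sub hcont
      · intro x hx
        rw [hIcc] at hx ⊢
        exact (((hquad M x).sub (hf' x hx)).hasDerivWithinAt)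
      · intro x hx
        rw [hIcc] at hx ⊢
        have := ((hquad' M x).sub (hf'' x hx)).hasDerivWithinAt (s := Ioo b al)
        exact this.congr_deriv (by ring)
      · intro x hx
        rw [hIcc] at hx
        have := hlow x hx
        linarith
    · simp [hfb]
    · simp [hfal]
  intro x hx
  exact ⟨by linarith [low x hx], by linarith [upp x hx]⟩

end Sandwich

section COV

open Real

lemma image_sin_map {b al : ℝ} (hba : b < al) :
    (fun θ : ℝ => (b+al)/2 + (al-b)/2 * Real.sin θ) '' (Ioo (-(π/2)) (π/2)) = Ioo b al := by
  have hr : 0 < (al-b)/2 := by linarith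
  apply Set.Subset.antisymm
  · rintro y ⟨θ, hθ, rfl⟩
    obtain ⟨h1, h2⟩ := hθ
    have hs1 : Real.sin θ < 1 := by
      have := Real.strictMonoOn_sin (Set.mem_Icc.mpr ⟨h1.le, h2.le⟩)
        (Set.mem_Icc.mpr ⟨by linarith [Real.pi_pos], le_refl _⟩) h2
      simpa using this
    have hs2 : -1 < Real.sin θ := by
      have := Real.strictMonoOn_sin (Set.mem_Icc.mpr ⟨le_refl _, by linarith [Real.pi_pos]⟩)
        (Set.mem_Icc.mpr ⟨h1.le, h2.le⟩) h1
      simpa using this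
    constructor <;> nlinarith
  · intro y hy
    obtain ⟨h1, h2⟩ := hy
    set t : ℝ := (y - (b+al)/2) / ((al-b)/2) with htdef
    have ht1 : -1 < t := by
      rw [htdef, lt_div_iff₀ hr]; linarith
    have ht2 : t < 1 := by
      rw [htdef, div_lt_iff₀ hr]; linarith
    refine ⟨Real.arcsin t, ⟨?_, ?_⟩, ?_⟩
    · exact Real.neg_pi_div_two_lt_arcsin.mpr ht1
    · exact Real.arcsin_lt_pi_div_two.mpr ht2
    · show (b+al)/2 + (al-b)/2 * Real.sin (Real.arcsin t) = y
      rw [Real.sin_arcsin ht1.le ht2.le, htdef, mul_comm, div_mul_cancel₀ _ hr.ne']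
      ring

lemma cov_sin {b al : ℝ} (hba : b < al) (f : ℝ → ℝ) :
    ∫ x in Ioo b al, f x = ∫ θ in Ioo (-(π/2)) (π/2),
      ((al-b)/2 * Real.cos θ) * f ((b+al)/2 + (al-b)/2 * Real.sin θ) := by
  have hr : 0 < (al-b)/2 := by linarith
  set g : ℝ → ℝ := fun θ => (b+al)/2 + (al-b)/2 * Real.sin θ with hg
  have hg' : ∀ θ ∈ Ioo (-(π/2)) (π/2),
      HasDerivWithinAt g ((al-b)/2 * Real.cos θ) (Ioo (-(π/2)) (π/2)) θ := by
    intro θ _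
    exact (((Real.hasDerivAt_sin θ).const_mul ((al-b)/2)).const_add ((b+al)/2)).hasDerivWithinAt
  have hinj : Set.InjOn g (Ioo (-(π/2)) (π/2)) := by
    intro θ1 h1 θ2 h2 he
    have : Real.sin θ1 = Real.sin θ2 := by
      have := he
      simp only [hg] at this
      have h := mul_left_cancel₀ hr.ne' (by linarith : (al-b)/2 * Real.sin θ1 = (al-b)/2 * Real.sin θ2)
      exact h
    exact Real.injOn_sin (Set.mem_Icc.mpr ⟨h1.1.le, h1.2.le⟩)
      (Set.mem_Icc.mpr ⟨h2.1.le, h2.2.le⟩) this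
  have himg := image_sin_map hba
  calc ∫ x in Ioo b al, f x = ∫ x in g '' (Ioo (-(π/2)) (π/2)), f x := by rw [himg]
    _ = ∫ θ in Ioo (-(π/2)) (π/2), |(al-b)/2 * Real.cos θ| • f (g θ) :=
        integral_image_eq_integral_abs_deriv_smul measurableSet_Ioo hg' hinj f
    _ = ∫ θ in Ioo (-(π/2)) (π/2), ((al-b)/2 * Real.cos θ) * f (g θ) := by
        apply MeasureTheory.setIntegral_congr_fun measurableSet_Ioo
        intro θ hθ
        have hc : 0 ≤ Real.cos θ := Real.cos_nonneg_of_mem_Icc (Set.mem_Icc.mpr ⟨hθ.1.le, hθ.2.le⟩)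
        simp only [smul_eq_mul]
        rw [abs_of_nonneg (by positivity : (0:ℝ) ≤ (al-b)/2 * Real.cos θ)]

end COV

section Cont

lemma contAt_Qdd (p : ℝ) {a₀ x₀ : ℝ} (hx : x₀ ≠ 0) :
    ContinuousAt (fun z : ℝ × ℝ => Qdd p z.1 z.2) (a₀, x₀) := by
  have hrp : ContinuousAt (fun z : ℝ × ℝ => z.2 ^ (2*(1-p) - 2)) (a₀, x₀) :=
    continuousAt_snd.rpow_const (Or.inl hx)
  exact (((continuousAt_fst.mul continuousAt_const).mul continuousAt_const).mul hrp).sub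
    continuousAt_const

lemma contAt_etafun (p : ℝ) {a₀ x₀ : ℝ} (hx : x₀ ≠ 0) :
    ContinuousAt (fun z : ℝ × ℝ => etafun p z.1 z.2) (a₀, x₀) := by
  have h1 : ContinuousAt (fun z : ℝ × ℝ => z.2 ^ (1 - p)) (a₀, x₀) :=
    continuousAt_snd.rpow_const (Or.inl hx)
  have h2 : ContinuousAt (fun z : ℝ × ℝ => z.2 ^ (-1 - p)) (a₀, x₀) :=
    continuousAt_snd.rpow_const (Or.inl hx)
  have h3 : ContinuousAt (fun z : ℝ × ℝ => z.2 ^ (p + 1)) (a₀, x₀) :=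
    continuousAt_snd.rpow_const (Or.inl hx)
  have h4 : ContinuousAt (fun z : ℝ × ℝ => z.2 ^ (p - 1)) (a₀, x₀) :=
    continuousAt_snd.rpow_const (Or.inl hx)
  have h5 : ContinuousAt (fun z : ℝ × ℝ => z.2 ^ (p - 3)) (a₀, x₀) :=
    continuousAt_snd.rpow_const (Or.inl hx)
  exact (((((continuousAt_const.mul continuousAt_fst).mul h1).sub
    ((continuousAt_const.mul continuousAt_fst).mul h2)).add
    (continuousAt_const.mul h3)).add (continuousAt_const.mul h4)).add
    (continuousAt_const.mul h5)

lemma contAt_etafun_x (p a : ℝ) {x₀ : ℝ} (hx : x₀ ≠ 0) :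
    ContinuousAt (fun x : ℝ => etafun p a x) x₀ := by
  have := (contAt_etafun p (a₀ := a) hx).comp
    ((continuousAt_const (y := a)).prodMk continuousAt_id)
  exact this

lemma Qdd_ast_xst {p : ℝ} (hp0 : 0 < p) (hp1 : p < 1) :
    Qdd p (p ^ p * (1 - p) ^ (1 - p)) (xst p) = -(2 * (2*p*(1-p)^2)) := by
  have hq : (0:ℝ) < 1 - p := by linarith
  have h2 := ast_xst_neg2p hp0 hp1
  have he : (xst p) ^ (2*(1-p) - 2) = (xst p) ^ (-(2*p)) := by
    rw [show 2*(1-p) - 2 = -(2*p) by ring]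
  rw [Qdd, he]
  rw [show p ^ p * (1 - p) ^ (1 - p) * (2*(1-p)) * (2*(1-p)-1) * (xst p) ^ (-(2*p))
    = (2*(1-p)) * (2*(1-p)-1) * (p ^ p * (1 - p) ^ (1 - p) * (xst p) ^ (-(2*p))) by ring, h2]
  ring

end Cont


set_option maxHeartbeats 2000000 in
/-- For fixed `p ∈ (0,1)`, one has the one-sided limit
`lim_{a → a_*⁺} Υ_p(a) = −√2·p^(p/2)·(1−p)^((1−p)/2)·π`. -/
theorem Ups_tendsto (p : ℝ) (hp : p ∈ Set.Ioo (0 : ℝ) 1)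
    (β α : ℝ → ℝ)
    (hroots : ∀ a : ℝ, p ^ p * (1 - p) ^ (1 - p) < a →
      0 < β a ∧ β a < α a ∧ Qfun p a (β a) = 0 ∧ Qfun p a (α a) = 0 ∧
      ∀ x ∈ Set.Ioo (β a) (α a), 0 < Qfun p a x) :
    Filter.Tendsto (Ups p β α)
      (nhdsWithin (p ^ p * (1 - p) ^ (1 - p)) (Set.Ioi (p ^ p * (1 - p) ^ (1 - p))))
      (nhds (-(Real.sqrt 2 * p ^ (p / 2) * (1 - p) ^ ((1 - p) / 2) * Real.pi))) := by
  obtain ⟨hp0, hp1⟩ := hp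
  have hq : (0:ℝ) < 1 - p := by linarith
  have hπ := Real.pi_pos
  set ast : ℝ := p ^ p * (1 - p) ^ (1 - p) with hastdef
  have hast : 0 < ast := by positivity
  have hxs := xst_pos hp0 hp1
  set c : ℝ := 2*p*(1-p)^2 with hcdef
  have hc : 0 < c := by positivity
  set etas : ℝ := etafun p ast (xst p) with hetasdef
  set L : ℝ := etas / Real.sqrt c with hLdef
  have hLval : L = -(Real.sqrt 2 * p ^ (p/2) * (1-p)^((1-p)/2)) := by
    rw [hLdef, hetasdef, etafun_ast_xst hp0 hp1]
    exact const_ident hp0 hp1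
  have htarget : -(Real.sqrt 2 * p ^ (p / 2) * (1 - p) ^ ((1 - p) / 2) * Real.pi)
      = L * Real.pi := by rw [hLval]; ring
  rw [htarget]
  rw [Metric.tendsto_nhds]
  intro ε hε
  set ε1 : ℝ := ε / (Real.pi + 1) with hε1def
  have hε1 : 0 < ε1 := by positivity
  -- continuity of (u,v) ↦ u / √v at (etas, c)
  have hsqc : 0 < Real.sqrt c := Real.sqrt_pos.mpr hc
  have hφ : ContinuousAt (fun z : ℝ × ℝ => z.1 / Real.sqrt z.2) (etas, c) := by
    exact continuousAt_fst.div
      ((Real.continuous_sqrt.continuousAt).comp continuousAt_snd) hsqc.ne'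
  obtain ⟨δφ, hδφ0, hδφ⟩ := Metric.continuousAt_iff.mp hφ ε1 hε1
  set ε' : ℝ := min (δφ/2) (c/2) with hε'def
  have hε'0 : 0 < ε' := by
    apply lt_min <;> [positivity; positivity]
  have hε'δφ : ε' < δφ := lt_of_le_of_lt (min_le_left _ _) (by linarith)
  have hε'c : ε' ≤ c/2 := min_le_right _ _
  have hcm : 0 < c - ε' := by linarith
  -- continuity of Qdd at (ast, xst)
  obtain ⟨δ2, hδ20, hδ2⟩ := Metric.continuousAt_iff.mp (contAt_Qdd p hxs.ne') (2*ε') (by linarith)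
  -- continuity of etafun at (ast, xst)
  obtain ⟨δ3, hδ30, hδ3⟩ := Metric.continuousAt_iff.mp (contAt_etafun p hxs.ne') ε' hε'0
  set δ : ℝ := min (min δ2 δ3) (xst p / 2) with hδdef
  have hδ0 : 0 < δ := by
    apply lt_min (lt_min hδ20 hδ30); positivity
  have hδxs : δ < xst p := lt_of_le_of_lt (min_le_right _ _) (by linarith)
  have hδ2' : δ ≤ δ2 := le_trans (min_le_left _ _) (min_le_left _ _)
  have hδ3' : δ ≤ δ3 := le_trans (min_le_left _ _) (min_le_right _ _)
  obtain ⟨ε2, hε20, hwin⟩ := root_window hp0 hp1 hδ0 hδxs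
  set εa : ℝ := min ε2 δ with hεadef
  have hεa0 : 0 < εa := lt_min hε20 hδ0
  filter_upwards [Ioo_mem_nhdsGT (show ast < ast + εa by linarith)] with a ha
  obtain ⟨ha1, ha2⟩ := ha
  have ha2' : a < ast + ε2 := by
    have : εa ≤ ε2 := min_le_left _ _
    simp only [mem_Ioo] at *
    linarith
  have haδ : |a - ast| < δ := by
    have h1 : εa ≤ δ := min_le_right _ _
    rw [abs_of_pos (by linarith : (0:ℝ) < a - ast)]
    simp only [mem_Ioo] at *
    linarith
  obtain ⟨hb0, hbal, hQb, hQal, hQpos⟩ := hroots a ha1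
  set b : ℝ := β a with hbdef
  set al : ℝ := α a with haldef
  -- roots are within δ of xst
  obtain ⟨hbw1, hbw2⟩ := hwin a ha1 ha2' b hb0 hQb
  obtain ⟨haw1, haw2⟩ := hwin a ha1 ha2' al (by linarith) hQal
  -- second-derivative bounds on [b, al]
  have hQddbd : ∀ x ∈ Ioo b al, -(2*(c+ε')) ≤ Qdd p a x ∧ Qdd p a x ≤ -(2*(c-ε')) := by
    intro x hx
    have hxw1 : xst p - δ < x := by have := hx.1; linarith
    have hxw2 : x < xst p + δ := by have := hx.2; linarith
    have hdist : dist ((a, x) : ℝ × ℝ) ((ast, xst p) : ℝ × ℝ) < δ2 := by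
      rw [Prod.dist_eq]
      apply max_lt
      · rw [Real.dist_eq]; exact lt_of_lt_of_le haδ hδ2'
      · rw [Real.dist_eq]
        rw [abs_lt]
        constructor <;> [linarith [hδ2']; linarith [hδ2']]
    have := hδ2 hdist
    rw [Real.dist_eq, Qdd_ast_xst hp0 hp1] at this
    rw [abs_lt] at this
    constructor <;> [linarith [this.1]; linarith [this.2]]
  -- sandwich for Q
  have hsand := sandwich_quad hbal ((continuous_Qfun p a hp1.le).continuousOn)
    (fun x hx => hasDerivAt_Qfun p a x (by linarith [hx.1] : x ≠ 0))
    (fun x hx => hasDerivAt_Qd p a x (by linarith [hx.1] : x ≠ 0))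
    hQb hQal
    (fun x hx => (hQddbd x hx).1) (fun x hx => (hQddbd x hx).2)
  -- the substituted integrand
  set r : ℝ := (al - b)/2 with hrdef
  have hr : 0 < r := by rw [hrdef]; linarith
  set m0 : ℝ := (b + al)/2 with hm0def
  set T : Set ℝ := Ioo (-(Real.pi/2)) (Real.pi/2) with hTdef
  set G : ℝ → ℝ := fun θ =>
    (r * Real.cos θ) * (etafun p a (m0 + r * Real.sin θ)
      / Real.sqrt (Qfun p a (m0 + r * Real.sin θ))) with hGdef
  -- change of variables
  have hUps : Ups p β α a = ∫ θ in T, G θ := by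
    rw [Ups, intervalIntegral.integral_of_le hbal.le, MeasureTheory.integral_Ioc_eq_integral_Ioo]
    exact cov_sin hbal _
  rw [hUps]
  -- pointwise estimate
  have hpt : ∀ θ ∈ T, |G θ - L| ≤ ε1 := by
    intro θ hθ
    have hcos : 0 < Real.cos θ := Real.cos_pos_of_mem_Ioo hθ
    set x : ℝ := m0 + r * Real.sin θ with hxdef
    have hxmem : x ∈ Ioo b al := by
      rw [← image_sin_map hbal]
      exact ⟨θ, hθ, rfl⟩
    have hQx : 0 < Qfun p a x := hQpos x hxmem
    have hs2 : 0 < (al - x)*(x - b) :=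
      mul_pos (by linarith [hxmem.2]) (by linarith [hxmem.1])
    have hbd := hsand x (Ioo_subset_Icc_self hxmem)
    set R : ℝ := Qfun p a x / ((al - x)*(x - b)) with hRdef
    have hR1 : c - ε' ≤ R := (le_div_iff₀ hs2).mpr hbd.1
    have hR2 : R ≤ c + ε' := (div_le_iff₀ hs2).mpr hbd.2
    have hR0 : 0 < R := by linarith
    -- |R - c| < δφ and |etafun - etas| < δφ
    have hRc : |R - c| < δφ := by
      rw [abs_lt]; constructor <;> [linarith; linarith]
    have hxw1 : xst p - δ < x := by have := hxmem.1; linarith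
    have hxw2 : x < xst p + δ := by have := hxmem.2; linarith
    have hetax : |etafun p a x - etas| < δφ := by
      have hdist : dist ((a, x) : ℝ × ℝ) ((ast, xst p) : ℝ × ℝ) < δ3 := by
        rw [Prod.dist_eq]
        apply max_lt
        · rw [Real.dist_eq]; exact lt_of_lt_of_le haδ hδ3'
        · rw [Real.dist_eq, abs_lt]
          constructor <;> [linarith [hδ3']; linarith [hδ3']]
      have := hδ3 hdist
      rw [Real.dist_eq] at this
      calc |etafun p a x - etas| < ε' := this
        _ < δφ := hε'δφ
    -- G θ = etafun p a x / sqrt R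
    have hs2eq : (al - x)*(x - b) = (r * Real.cos θ)^2 := by
      have hsc := Real.sin_sq_add_cos_sq θ
      have h1 : al - x = r * (1 - Real.sin θ) := by
        rw [hxdef, hrdef, hm0def]; ring
      have h2 : x - b = r * (1 + Real.sin θ) := by
        rw [hxdef, hrdef, hm0def]; ring
      rw [h1, h2]; linear_combination (-(r^2)) * hsc
    have hQeq : Qfun p a x = R * ((al - x)*(x - b)) := by
      rw [hRdef, div_mul_cancel₀ _ hs2.ne']
    have hsqrt : Real.sqrt (Qfun p a x) = Real.sqrt R * (r * Real.cos θ) := by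
      rw [hQeq, hs2eq, Real.sqrt_mul hR0.le, Real.sqrt_sq (by positivity)]
    have hGval : G θ = etafun p a x / Real.sqrt R := by
      rw [hGdef]
      simp only
      rw [← hxdef, hsqrt]
      have hrc : (0:ℝ) < r * Real.cos θ := by positivity
      have hsR : 0 < Real.sqrt R := Real.sqrt_pos.mpr hR0
      field_simp
    -- apply continuity of φ
    have hdistz : dist ((etafun p a x, R) : ℝ × ℝ) ((etas, c) : ℝ × ℝ) < δφ := by
      rw [Prod.dist_eq]
      apply max_lt
      · rw [Real.dist_eq]; exact hetax
      · rw [Real.dist_eq]; exact hRc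
    have := hδφ hdistz
    rw [Real.dist_eq] at this
    simp only at this
    rw [hGval]
    calc |etafun p a x / Real.sqrt R - L| = |etafun p a x / Real.sqrt R - etas / Real.sqrt c| := by
          rw [hLdef]
      _ ≤ ε1 := by
          have : |etafun p a x / Real.sqrt R - etas / Real.sqrt c| < ε1 := this
          linarith
  -- integrability of G on T
  have hTmeas : MeasurableSet T := measurableSet_Ioo
  have hTvol : MeasureTheory.volume T = ENNReal.ofReal Real.pi := by
    rw [hTdef, Real.volume_Ioo]
    congr 1
    ring
  have hTfin : MeasureTheory.volume T < ⊤ := by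
    rw [hTvol]; exact ENNReal.ofReal_lt_top
  have hGcont : ContinuousOn G T := by
    intro θ hθ
    apply ContinuousAt.continuousWithinAt
    have hcos : 0 < Real.cos θ := Real.cos_pos_of_mem_Ioo hθ
    set x : ℝ := m0 + r * Real.sin θ with hxdef
    have hxmem : x ∈ Ioo b al := by
      rw [← image_sin_map hbal]
      exact ⟨θ, hθ, rfl⟩
    have hx0 : 0 < x := lt_trans hb0 hxmem.1
    have hQx : 0 < Qfun p a x := hQpos x hxmem
    have hgc : ContinuousAt (fun θ : ℝ => m0 + r * Real.sin θ) θ :=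
      (continuousAt_const.mul (Real.continuous_sin.continuousAt)).const_add m0
    have hec : ContinuousAt (fun θ : ℝ => etafun p a (m0 + r * Real.sin θ)) θ :=
      ContinuousAt.comp (g := fun y => etafun p a y)
        (f := fun θ : ℝ => m0 + r * Real.sin θ) (contAt_etafun_x p a hx0.ne') hgc
    have hQc : ContinuousAt (fun θ : ℝ => Real.sqrt (Qfun p a (m0 + r * Real.sin θ))) θ :=
      ContinuousAt.comp (g := Real.sqrt)
        (f := fun θ : ℝ => Qfun p a (m0 + r * Real.sin θ))
        (Real.continuous_sqrt.continuousAt)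
        (ContinuousAt.comp (g := fun y => Qfun p a y)
          (f := fun θ : ℝ => m0 + r * Real.sin θ)
          ((continuous_Qfun p a hp1.le).continuousAt) hgc)
    have hQne : Real.sqrt (Qfun p a x) ≠ 0 := (Real.sqrt_pos.mpr hQx).ne'
    exact (continuousAt_const.mul (Real.continuous_cos.continuousAt)).mul (hec.div hQc hQne)
  have hGbdd : ∀ θ ∈ T, ‖G θ‖ ≤ |L| + ε1 := by
    intro θ hθ
    have := hpt θ hθ
    rw [Real.norm_eq_abs]
    calc |G θ| = |(G θ - L) + L| := by ring_nf
      _ ≤ |G θ - L| + |L| := abs_add_le _ _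
      _ ≤ |L| + ε1 := by linarith
  have hGint : MeasureTheory.IntegrableOn G T := by
    constructor
    · exact hGcont.aestronglyMeasurable hTmeas
    · apply MeasureTheory.HasFiniteIntegral.restrict_of_bounded (|L| + ε1) hTfin
      apply (MeasureTheory.ae_restrict_iff' hTmeas).mpr
      filter_upwards with θ hθ
      exact hGbdd θ hθ
  -- final estimate
  have hLint : MeasureTheory.IntegrableOn (fun _ : ℝ => L) T :=
    MeasureTheory.integrableOn_const hTfin.ne
  have hsplit : (∫ θ in T, G θ) - L * Real.pi = ∫ θ in T, (G θ - L) := by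
    rw [MeasureTheory.integral_sub hGint hLint]
    congr 1
    rw [MeasureTheory.setIntegral_const, smul_eq_mul, measureReal_def, hTvol,
      ENNReal.toReal_ofReal hπ.le]
    ring
  have hbound : ‖∫ θ in T, (G θ - L)‖ ≤ ε1 * Real.pi := by
    have h := MeasureTheory.norm_setIntegral_le_of_norm_le_const hTfin
      (f := fun θ => G θ - L) (C := ε1) ?_
    · rw [measureReal_def, hTvol, ENNReal.toReal_ofReal hπ.le] at h
      exact h
    · intro θ hθ
      rw [Real.norm_eq_abs]
      exact hpt θ hθ
  rw [Real.dist_eq]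
  calc |(∫ θ in T, G θ) - L * Real.pi| = ‖∫ θ in T, (G θ - L)‖ := by
        rw [hsplit, Real.norm_eq_abs]
    _ ≤ ε1 * Real.pi := hbound
    _ < ε := by
        rw [hε1def]
        rw [div_mul_eq_mul_div, div_lt_iff₀ (by linarith : (0:ℝ) < Real.pi + 1)]
        have : ε * Real.pi < ε * (Real.pi + 1) :=
          mul_lt_mul_of_pos_left (by linarith) hε
        linarith
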